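/- The Lorenz five-component system ẋ1 = −x2x3 + εx2x5, ẋ2 = x1x3 − εx1x5, ẋ3 = −x1x2, ẋ4 = −x5, ẋ5 = x4 + εx1x2 is Hamiltonian with respect to the bracket {·,·}_1 with Hamiltonian H(x) = ½(x1² + 2x2² + x3² + x4² + x5²); that is, for each coordinate function xi, the vector field component equals {xi, H}_1. -/

import Mathlib

noncomputable def pd (i : Fin 5) (f : (Fin 5 → ℝ) → ℝ) (x : Fin 5 → ℝ) : ℝ :=
  fderiv ℝ f x (Pi.single i 1)

noncomputable def bracket1 (ε : ℝ) (f g : (Fin 5 → ℝ) → ℝ) (x : Fin 5 → ℝ) : ℝ :=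
  x 0 * ((pd 1 f x * pd 2 g x - pd 2 f x * pd 1 g x)
        + ε * (pd 4 f x * pd 1 g x - pd 1 f x * pd 4 g x))
  + x 1 * ((pd 2 f x * pd 0 g x - pd 0 f x * pd 2 g x)
        + ε * (pd 0 f x * pd 4 g x - pd 4 f x * pd 0 g x))
  + pd 4 f x * pd 3 g x - pd 3 f x * pd 4 g x

noncomputable def bracket2 (f g : (Fin 5 → ℝ) → ℝ) (x : Fin 5 → ℝ) : ℝ :=
  x 0 * (pd 1 f x * pd 2 g x - pd 2 f x * pd 1 g x)
  + x 1 * (pd 2 f x * pd 0 g x - pd 0 f x * pd 2 g x)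
  + pd 4 f x * pd 3 g x - pd 3 f x * pd 4 g x

lemma hproj (j : Fin 5) (x : Fin 5 → ℝ) :
    HasFDerivAt (fun y : Fin 5 → ℝ => y j)
      (ContinuousLinearMap.proj j : (Fin 5 → ℝ) →L[ℝ] ℝ) x :=
  (ContinuousLinearMap.proj j : (Fin 5 → ℝ) →L[ℝ] ℝ).hasFDerivAt

lemma pd_coord (i j : Fin 5) (x : Fin 5 → ℝ) :
    pd i (fun y => y j) x = if j = i then 1 else 0 := by
  simp [pd, (hproj j x).fderiv, Pi.single_apply]

lemma pd_H (i : Fin 5) (x : Fin 5 → ℝ) :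
    pd i (fun y => (1/2) * ((y 0)^2 + 2*(y 1)^2 + (y 2)^2 + (y 3)^2 + (y 4)^2)) x
    = (if i = 1 then 2 else 1) * x i := by
  have hfun : (fun y : Fin 5 → ℝ => (1/2) * ((y 0)^2 + 2*(y 1)^2 + (y 2)^2 + (y 3)^2 + (y 4)^2))
      = fun y : Fin 5 → ℝ => (1/2) * ((y 0 * y 0 + 2*(y 1 * y 1) + y 2 * y 2 + y 3 * y 3) + y 4 * y 4) := by
    funext y; ring
  have p : ∀ j : Fin 5, HasFDerivAt (fun y : Fin 5 → ℝ => y j * y j)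
      (x j • (ContinuousLinearMap.proj j : (Fin 5 → ℝ) →L[ℝ] ℝ)
        + x j • ContinuousLinearMap.proj j) x := fun j => (hproj j x).mul (hproj j x)
  have h := (((((p 0).add ((p 1).const_mul 2)).add (p 2)).add (p 3)).add (p 4)).const_mul (1/2)
  have h' := h.fderiv
  simp only [Pi.add_apply] at h'
  rw [pd, hfun, h']
  fin_cases i <;> simp [Pi.single_apply] <;> ring

lemma pd_H0 (x : Fin 5 → ℝ) :
    pd 0 (fun y => (1/2) * ((y 0)^2 + 2*(y 1)^2 + (y 2)^2 + (y 3)^2 + (y 4)^2)) x = x 0 := by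
  rw [pd_H]; norm_num
lemma pd_H1 (x : Fin 5 → ℝ) :
    pd 1 (fun y => (1/2) * ((y 0)^2 + 2*(y 1)^2 + (y 2)^2 + (y 3)^2 + (y 4)^2)) x = 2 * x 1 := by
  rw [pd_H]; norm_num
lemma pd_H2 (x : Fin 5 → ℝ) :
    pd 2 (fun y => (1/2) * ((y 0)^2 + 2*(y 1)^2 + (y 2)^2 + (y 3)^2 + (y 4)^2)) x = x 2 := by
  rw [pd_H, if_neg (by decide)]; ring
lemma pd_H3 (x : Fin 5 → ℝ) :
    pd 3 (fun y => (1/2) * ((y 0)^2 + 2*(y 1)^2 + (y 2)^2 + (y 3)^2 + (y 4)^2)) x = x 3 := by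
  rw [pd_H, if_neg (by decide)]; ring
lemma pd_H4 (x : Fin 5 → ℝ) :
    pd 4 (fun y => (1/2) * ((y 0)^2 + 2*(y 1)^2 + (y 2)^2 + (y 3)^2 + (y 4)^2)) x = x 4 := by
  rw [pd_H, if_neg (by decide)]; ring

theorem lorenz_hamiltonian_bracket1 (ε : ℝ) :
    ∀ x : Fin 5 → ℝ,
      bracket1 ε (fun y => y 0)
        (fun y => (1/2) * ((y 0)^2 + 2*(y 1)^2 + (y 2)^2 + (y 3)^2 + (y 4)^2)) x
        = -(x 1)*(x 2) + ε*(x 1)*(x 4) ∧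
      bracket1 ε (fun y => y 1)
        (fun y => (1/2) * ((y 0)^2 + 2*(y 1)^2 + (y 2)^2 + (y 3)^2 + (y 4)^2)) x
        = (x 0)*(x 2) - ε*(x 0)*(x 4) ∧
      bracket1 ε (fun y => y 2)
        (fun y => (1/2) * ((y 0)^2 + 2*(y 1)^2 + (y 2)^2 + (y 3)^2 + (y 4)^2)) x
        = -((x 0)*(x 1)) ∧
      bracket1 ε (fun y => y 3)
        (fun y => (1/2) * ((y 0)^2 + 2*(y 1)^2 + (y 2)^2 + (y 3)^2 + (y 4)^2)) x
        = -(x 4) ∧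
      bracket1 ε (fun y => y 4)
        (fun y => (1/2) * ((y 0)^2 + 2*(y 1)^2 + (y 2)^2 + (y 3)^2 + (y 4)^2)) x
        = x 3 + ε*(x 0)*(x 1) := by
  intro x
  refine ⟨?_, ?_, ?_, ?_, ?_⟩ <;>
    · simp only [bracket1, pd_coord, pd_H0, pd_H1, pd_H2, pd_H3, pd_H4]
      norm_num [Fin.ext_iff, show ((3:Fin 5):ℕ)=3 from rfl, show ((4:Fin 5):ℕ)=4 from rfl]
      try ring
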